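/- arXiv:math/9912062 — 2 statements merged into one kernel-verified Lean document; each statement's English description precedes it below -/
import Mathlib

section
/- Let X and Y be metric spaces with asdim X ≤ m and asdim Y ≤ n. Then the product X × Y with the ℓ∞ (max) metric satisfies asdim(X × Y) ≤ m + n + 1. (Weaker form using the cover-by-disjoint-families definition: given d > 0, from a uniformly bounded cover of X by m+1 d-disjoint families and a uniformly bounded cover of Y by n+1 d-disjoint families, one can construct a uniformly bounded cover of X × Y by (m+1)(n+1) d-disjoint families, hence asdim(X × Y) ≤ (m+1)(n+1) − 1.) -/
/-- `AsdimLE n X` : the asymptotic dimension of `X` is at most `n`, via the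
definition by covers splitting into `n+1` uniformly bounded `d`-disjoint families. -/
def AsdimLE (n : ℕ) (X : Type*) [MetricSpace X] : Prop :=
  ∀ d > (0 : ℝ), ∃ (𝒰 : Fin (n + 1) → Set (Set X)) (B : ℝ),
    (∀ x : X, ∃ i, ∃ U ∈ 𝒰 i, x ∈ U) ∧
    (∀ i, ∀ U ∈ 𝒰 i, Metric.diam U ≤ B ∧ Bornology.IsBounded U) ∧
    (∀ i, ∀ U ∈ 𝒰 i, ∀ V ∈ 𝒰 i, U ≠ V → ∀ x ∈ U, ∀ y ∈ V, d < dist x y)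

/-- weaker product theorem: if `asdim X ≤ m` and `asdim Y ≤ n`,
then the product `X × Y` with the `ℓ∞` (max) metric (Mathlib's product metric)
satisfies `asdim (X × Y) ≤ (m+1)(n+1) - 1`. -/
theorem statement4 {X Y : Type*} [MetricSpace X] [MetricSpace Y] (m n : ℕ)
    (hX : AsdimLE m X) (hY : AsdimLE n Y) :
    AsdimLE ((m + 1) * (n + 1) - 1) (X × Y) := by
  intro d hd
  obtain ⟨𝒰, B, hcovX, hbX, hdisX⟩ := hX d hd
  obtain ⟨𝒱, C, hcovY, hbY, hdisY⟩ := hY d hd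
  have hpos : 0 < (m + 1) * (n + 1) := by positivity
  have hcast : (m + 1) * (n + 1) - 1 + 1 = (m + 1) * (n + 1) := Nat.sub_add_cancel hpos
  refine ⟨fun k =>
      {S | ∃ U ∈ 𝒰 (finProdFinEquiv.symm (Fin.cast hcast k)).1,
           ∃ V ∈ 𝒱 (finProdFinEquiv.symm (Fin.cast hcast k)).2, S = U ×ˢ V},
    max (max B C) 0, ?_, ?_, ?_⟩
  · rintro ⟨x, y⟩
    obtain ⟨i, U, hU, hxU⟩ := hcovX x
    obtain ⟨j, V, hV, hyV⟩ := hcovY y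
    refine ⟨Fin.cast hcast.symm (finProdFinEquiv (i, j)), U ×ˢ V, ?_, ⟨hxU, hyV⟩⟩
    exact ⟨U, by simpa using hU, V, by simpa using hV, rfl⟩
  · rintro k S ⟨U, hU, V, hV, rfl⟩
    obtain ⟨hdU, hbU⟩ := hbX _ U hU
    obtain ⟨hdV, hbV⟩ := hbY _ V hV
    constructor
    · refine Metric.diam_le_of_forall_dist_le (le_max_right _ _) ?_
      rintro ⟨x₁, y₁⟩ ⟨hx₁, hy₁⟩ ⟨x₂, y₂⟩ ⟨hx₂, hy₂⟩
      rw [Prod.dist_eq]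
      refine le_trans (max_le_max
        (le_trans (Metric.dist_le_diam_of_mem hbU hx₁ hx₂) hdU)
        (le_trans (Metric.dist_le_diam_of_mem hbV hy₁ hy₂) hdV)) (le_max_left _ _)
    · exact hbU.prod hbV
  · rintro k S ⟨U, hU, V, hV, rfl⟩ T ⟨U', hU', V', hV', rfl⟩ hne ⟨x₁, y₁⟩ ⟨hx₁, hy₁⟩
      ⟨x₂, y₂⟩ ⟨hx₂, hy₂⟩
    rw [Prod.dist_eq]
    by_cases hUU : U = U'
    · have hVV : V ≠ V' := by rintro rfl; exact hne (by rw [hUU])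
      exact lt_max_of_lt_right (hdisY _ V hV V' hV' hVV y₁ hy₁ y₂ hy₂)
    · exact lt_max_of_lt_left (hdisX _ U hU U' hU' hUU x₁ hx₁ x₂ hx₂)
end

section
/- A metric tree (ℝ-tree, e.g. the geometric realization of a simplicial tree with edge lengths) has asymptotic dimension at most 1. -/
/-- `X` is a geodesic space: any two points are joined by an isometric image of
an interval. -/
def GeodesicSpace (X : Type*) [MetricSpace X] : Prop :=
  ∀ x y : X, ∃ f : ℝ → X, f 0 = x ∧ f (dist x y) = y ∧
    ∀ s ∈ Set.Icc (0 : ℝ) (dist x y), ∀ t ∈ Set.Icc (0 : ℝ) (dist x y),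
      dist (f s) (f t) = |s - t|

/-- `X` is 0-hyperbolic (four-point condition), so together with geodesicity
`X` is an ℝ-tree. -/
def ZeroHyperbolic (X : Type*) [MetricSpace X] : Prop :=
  ∀ x y z w : X,
    dist x y + dist z w ≤ max (dist x z + dist y w) (dist x w + dist y z)

namespace Statement6Aux

variable {X : Type*} [MetricSpace X]

/-- Gromov product based at `w`. -/
noncomputable def gp (w x y : X) : ℝ := (dist x w + dist y w - dist x y) / 2

lemma gp_nonneg (w x y : X) : 0 ≤ gp w x y := by
  have := dist_triangle x w y
  have := dist_comm w y
  unfold gp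
  rw [dist_comm y w]
  linarith [dist_triangle x w y]

lemma gp_symm (w x y : X) : gp w x y = gp w y x := by
  unfold gp; rw [dist_comm x y]; ring

lemma gp_self (w x : X) : gp w x x = dist x w := by
  unfold gp; simp

lemma gp_trans (htree : ZeroHyperbolic X) (w : X) {t : ℝ} {x y z : X}
    (h1 : t ≤ gp w x y) (h2 : t ≤ gp w y z) : t ≤ gp w x z := by
  have h := htree x z y w
  unfold gp at *
  have hc : dist z y = dist y z := dist_comm z y
  rcases le_max_iff.mp h with h' | h'
  · linarith
  · linarith

/-- Annulus number `k` of width `2d` around `w`. -/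
def ann (d : ℝ) (w : X) (k : ℕ) : Set X :=
  {x | 2 * d * k ≤ dist x w ∧ dist x w < 2 * d * (k + 1)}

/-- The piece (equivalence class) of `x` in annulus `k`. -/
noncomputable def cls (d : ℝ) (w : X) (k : ℕ) (x : X) : Set X :=
  {y | y ∈ ann d w k ∧ max (2 * d * k - d) 0 ≤ gp w x y}

end Statement6Aux

open Statement6Aux in
/-- An ℝ-tree (geodesic 0-hyperbolic metric space) has asymptotic
dimension at most 1. -/
theorem statement6 {X : Type*} [MetricSpace X]
    (hgeo : GeodesicSpace X) (htree : ZeroHyperbolic X) :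
    AsdimLE 1 X := by
  intro d hd
  rcases isEmpty_or_nonempty X with hX | ⟨⟨w⟩⟩
  · exact ⟨fun _ => ∅, 0, fun x => hX.elim x,
      fun i U hU => absurd hU (Set.notMem_empty U),
      fun i U hU => absurd hU (Set.notMem_empty U)⟩
  refine ⟨fun i => {U | ∃ (k : ℕ) (x : X), k % 2 = (i : ℕ) ∧ x ∈ ann d w k ∧
      U = cls d w k x}, 6 * d, ?_, ?_, ?_⟩
  · -- cover
    intro x
    set k : ℕ := ⌊dist x w / (2 * d)⌋₊ with hk
    have h2d : (0 : ℝ) < 2 * d := by linarith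
    have hxw : (0 : ℝ) ≤ dist x w / (2 * d) := div_nonneg dist_nonneg h2d.le
    have hx1 : 2 * d * k ≤ dist x w := by
      have := Nat.floor_le hxw
      calc 2 * d * k ≤ 2 * d * (dist x w / (2 * d)) := by
            apply mul_le_mul_of_nonneg_left this h2d.le
        _ = dist x w := by field_simp
    have hx2 : dist x w < 2 * d * (k + 1) := by
      have := Nat.lt_floor_add_one (dist x w / (2 * d))
      calc dist x w = 2 * d * (dist x w / (2 * d)) := by field_simp
        _ < 2 * d * (k + 1) := by
            apply mul_lt_mul_of_pos_left _ h2d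
            exact_mod_cast this
    have hxA : x ∈ ann d w k := ⟨hx1, hx2⟩
    refine ⟨⟨k % 2, Nat.mod_lt _ two_pos⟩, cls d w k x, ⟨k, x, rfl, hxA, rfl⟩, hxA, ?_⟩
    rw [gp_self]
    apply max_le _ dist_nonneg
    nlinarith [hx1, hd]
  · -- uniformly bounded
    rintro i U ⟨k, x, -, hxA, rfl⟩
    have hxC : x ∈ cls d w k x := by
      refine ⟨hxA, ?_⟩
      rw [gp_self]
      exact max_le (by nlinarith [hxA.1, hd]) dist_nonneg
    have key : ∀ y ∈ cls d w k x, ∀ z ∈ cls d w k x, dist y z ≤ 6 * d := by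
      rintro y ⟨hyA, hy⟩ z ⟨hzA, hz⟩
      have hyz : max (2 * d * k - d) 0 ≤ gp w y z :=
        gp_trans htree w (by rw [gp_symm]; exact hy) hz
      have h1 : 2 * d * k - d ≤ gp w y z := le_trans (le_max_left _ _) hyz
      have := hyA.2
      have := hzA.2
      unfold gp at h1
      linarith
    constructor
    · exact Metric.diam_le_of_forall_dist_le (by linarith) key
    · apply Bornology.IsBounded.subset (Metric.isBounded_closedBall (x := x) (r := 6 * d))
      intro y hy
      exact Metric.mem_closedBall.mpr (key y hy x hxC)
  · -- d-disjointness
    rintro i U ⟨k, x, hki, hxA, rfl⟩ V ⟨k', x', hki', hx'A, rfl⟩ hUV y hy z hz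
    by_cases hkk : k = k'
    · subst hkk
      -- same annulus: classes distinct forces small Gromov product
      have hglt : gp w y z < max (2 * d * k - d) 0 := by
        by_contra hge
        push_neg at hge
        apply hUV
        have ht : ∀ a b : X, max (2 * d * k - d) 0 ≤ gp w a b →
            max (2 * d * k - d) 0 ≤ gp w b a := fun a b h => by rwa [gp_symm] at h
        have hxy : max (2 * d * k - d) 0 ≤ gp w x y := hy.2
        have hx'z : max (2 * d * k - d) 0 ≤ gp w x' z := hz.2
        have hxx' : max (2 * d * k - d) 0 ≤ gp w x x' :=
          gp_trans htree w (gp_trans htree w hxy hge) (ht _ _ hx'z)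
        ext u
        constructor
        · rintro ⟨huA, hu⟩
          exact ⟨huA, gp_trans htree w (ht _ _ hxx') hu⟩
        · rintro ⟨huA, hu⟩
          exact ⟨huA, gp_trans htree w hxx' hu⟩
      have h0 : (0 : ℝ) ≤ gp w y z := gp_nonneg w y z
      have hpos : 0 < max (2 * d * k - d) 0 := lt_of_le_of_lt h0 hglt
      have hmax : max (2 * d * k - d) 0 = 2 * d * k - d := by
        rcases max_cases (2 * d * k - d) (0 : ℝ) with h | h
        · exact h.1
        · exfalso; rw [h.1] at hpos; exact lt_irrefl 0 hpos
      rw [hmax] at hglt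
      have h1 := hy.1.1
      have h2 := hz.1.1
      unfold gp at hglt
      linarith
    · -- different annuli of the same parity: radial separation
      have hpar : k % 2 = k' % 2 := by rw [hki, hki']
      have hcase : k + 2 ≤ k' ∨ k' + 2 ≤ k := by omega
      have htri := dist_triangle z y w
      have htri' := dist_triangle y z w
      rcases hcase with h | h
      · have h1 := hy.1.2
        have h2 := hz.1.1
        have hle : 2 * d * ((k : ℝ) + 2) ≤ 2 * d * (k' : ℝ) := by
          apply mul_le_mul_of_nonneg_left _ (by linarith)
          have : ((k : ℝ) + 2) = ((k + 2 : ℕ) : ℝ) := by push_cast; ring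
          rw [this]
          exact_mod_cast Nat.cast_le.mpr h
        rw [dist_comm z y] at htri
        linarith
      · have h1 := hz.1.2
        have h2 := hy.1.1
        have hle : 2 * d * ((k' : ℝ) + 2) ≤ 2 * d * (k : ℝ) := by
          apply mul_le_mul_of_nonneg_left _ (by linarith)
          have : ((k' : ℝ) + 2) = ((k' + 2 : ℕ) : ℝ) := by push_cast; ring
          rw [this]
          exact_mod_cast Nat.cast_le.mpr h
        linarith
end
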